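/- Let Γ₀ be a maximally Log-consistent set. Then the canonical model M^c for Γ₀ is a problem-sensitive model: its domain [Γ₀]_⊞ is nonempty, ⊕^c = ∪ on 𝒫(Prop) is idempotent, commutative, associative and has unrestricted fusion, s^c is upward closed, and the relation R^c is serial on [Γ₀]_⊞ (every Δ ∈ [Γ₀]_⊞ has some Γ ∈ [Γ₀]_⊞ with Δ R^c Γ). -/

import Mathlib

/-- Formulas of classical propositional logic `L_CPL` over a countable set
of atomic propositions (represented by natural numbers). -/
inductive CPL : Type
  | top : CPL
  | atom : ℕ → CPL
  | neg : CPL → CPL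
  | or : CPL → CPL → CPL
  | and : CPL → CPL → CPL
  deriving DecidableEq
/-- `Var(φ)`: the (finite) set of atomic propositions occurring in `φ`. -/
def CPL.var : CPL → Finset ℕ
  | .top => ∅
  | .atom p => {p}
  | .neg φ => φ.var
  | .or φ ψ => φ.var ∪ ψ.var
  | .and φ ψ => φ.var ∪ ψ.var

/-- `p̄ := p ∨ ¬p`. -/
def pbar (p : ℕ) : CPL := .or (.atom p) (.neg (.atom p))

/-- Conjunction of a list of `L_CPL` formulas (empty conjunction is `⊤`). -/
def conjList : List CPL → CPL
  | [] => .top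
  | [α] => α
  | α :: β :: rest => .and α (conjList (β :: rest))

/-- `φ̄ := ⋀_{p ∈ Var(φ)} (p ∨ ¬p)`, with the conjuncts taken in the fixed
(increasing) enumeration order of the atomic propositions. -/
def CPL.bar (φ : CPL) : CPL := conjList ((φ.var.sort (· ≤ ·)).map pbar)
/-- Formulas of the language `L_Int`, extending `L_CPL` (embedded via `of`) by
negation, disjunction, conjunction, the global modality `⊞` (`box`) and the
intention modality `I` (`int`), which applies only to `L_CPL` formulas. -/
inductive Form : Type
  | of : CPL → Form
  | neg : Form → Form
  | or : Form → Form → Form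
  | and : Form → Form → Form
  | box : Form → Form
  | int : CPL → Form
  deriving DecidableEq
/-- Material implication in `L_Int`: `φ → ψ := ¬φ ∨ ψ`. -/
def Form.imp (φ ψ : Form) : Form := .or (.neg φ) ψ

/-- Material biconditional in `L_Int`: `φ ↔ ψ := (φ → ψ) ∧ (ψ → φ)`. -/
def Form.iff (φ ψ : Form) : Form := .and (φ.imp ψ) (ψ.imp φ)

/-- `⊥ := ¬⊤`. -/
def Form.bot : Form := .neg (.of .top)

/-- Boolean evaluation of `L_CPL` formulas under a valuation of the atoms. -/
def CPL.eval (v : ℕ → Bool) : CPL → Bool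
  | .top => true
  | .atom p => v p
  | .neg φ => !φ.eval v
  | .or φ ψ => φ.eval v || ψ.eval v
  | .and φ ψ => φ.eval v && ψ.eval v

/-- Boolean evaluation of `L_Int` formulas, treating `⊞`- and `I`-formulas as
atoms (evaluated by `u`). -/
def Form.eval (v : ℕ → Bool) (u : Form → Bool) : Form → Bool
  | .of α => α.eval v
  | .neg φ => !φ.eval v u
  | .or φ ψ => φ.eval v u || ψ.eval v u
  | .and φ ψ => φ.eval v u && ψ.eval v u
  | .box φ => u (.box φ)
  | .int α => u (.int α)

/-- Classical propositional tautologies of `L_Int` (with modal formulas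
treated as atoms). -/
def Taut (φ : Form) : Prop := ∀ v u, φ.eval v u = true

/-- Derivability in the proof system `Log`: classical tautologies and Modus
Ponens; `S5` axioms and necessitation for `⊞`; and the intention axioms
Ax1: `I⊤`; Ax2: `Iφ → Iφ̄`; Ax3: `Iφ → ¬I¬φ`; Ax4: `(Iφ ∧ Iψ) ↔ I(φ ∧ ψ)`;
Ax5: `⊞(ψ → φ) → ((Iψ ∧ Iφ̄) → Iφ)`. -/
inductive Deriv : Set Form → Form → Prop
  | prem {Γ : Set Form} {φ : Form} : φ ∈ Γ → Deriv Γ φ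
  | taut {Γ : Set Form} {φ : Form} : Taut φ → Deriv Γ φ
  | mp {Γ : Set Form} {φ ψ : Form} :
      Deriv Γ (φ.imp ψ) → Deriv Γ φ → Deriv Γ ψ
  | boxK {Γ : Set Form} (φ ψ : Form) :
      Deriv Γ ((Form.box (φ.imp ψ)).imp ((Form.box φ).imp (Form.box ψ)))
  | boxT {Γ : Set Form} (φ : Form) : Deriv Γ ((Form.box φ).imp φ)
  | box5 {Γ : Set Form} (φ : Form) :
      Deriv Γ ((Form.neg (Form.box φ)).imp (Form.box (Form.neg (Form.box φ))))
  | nec {Γ : Set Form} {φ : Form} : Deriv ∅ φ → Deriv Γ (Form.box φ)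
  | ax1 {Γ : Set Form} : Deriv Γ (Form.int .top)
  | ax2 {Γ : Set Form} (α : CPL) :
      Deriv Γ ((Form.int α).imp (Form.int α.bar))
  | ax3 {Γ : Set Form} (α : CPL) :
      Deriv Γ ((Form.int α).imp (Form.neg (Form.int (CPL.neg α))))
  | ax4 {Γ : Set Form} (α β : CPL) :
      Deriv Γ ((Form.and (.int α) (.int β)).iff (Form.int (.and α β)))
  | ax5 {Γ : Set Form} (α β : CPL) :
      Deriv Γ ((Form.box ((Form.of β).imp (Form.of α))).imp
        ((Form.and (.int β) (.int α.bar)).imp (Form.int α)))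

/-- A set of formulas is `Log`-consistent if `⊥` is not derivable from it. -/
def LogConsistent (Γ : Set Form) : Prop := ¬ Deriv Γ Form.bot

/-- A maximally `Log`-consistent set: consistent with no proper consistent
extension. -/
def MCS (Γ : Set Form) : Prop :=
  LogConsistent Γ ∧ ∀ Δ, LogConsistent Δ → Γ ⊆ Δ → Δ = Γ
/-- `Γ[⊞] = {φ : ⊞φ ∈ Γ}`. -/
def boxSet (Γ : Set Form) : Set Form := {φ | Form.box φ ∈ Γ}

/-- `Γ[I] = {φ ∈ L_Int : Iψ ∧ ⊞(ψ → φ) ∈ Γ for some ψ ∈ L_CPL}`. -/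
def intSet (Γ : Set Form) : Set Form :=
  {φ | ∃ ψ : CPL, Form.and (Form.int ψ) (Form.box ((Form.of ψ).imp φ)) ∈ Γ}
/-- `[Γ₀]_⊞`: the `∼⊞`-equivalence class of `Γ₀`, i.e. the maximally
`Log`-consistent sets `Δ` with `Γ₀[⊞] ⊆ Δ`. -/
def canonDomain (Γ₀ : Set Form) : Set (Set Form) :=
  {Δ | MCS Δ ∧ boxSet Γ₀ ⊆ Δ}
/-- The data of a problem-sensitive model: worlds, a conative relation, a set
of decision problems with a fusion operation and a solution assignment for
atoms, a problem assignment `f`, and a valuation `V`. -/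
structure PreModel where
  W : Type
  R : W → W → Prop
  P : Type
  fuse : P → P → P
  satom : ℕ → Set P
  f : W → P
  V : ℕ → Set W

/-- The extension of the solution assignment to the whole language `L_CPL`. -/
def PreModel.sol (M : PreModel) : CPL → Set M.P
  | .top => Set.univ
  | .atom p => M.satom p
  | .neg φ => M.sol φ
  | .or φ ψ => M.sol φ ∩ M.sol ψ
  | .and φ ψ => {c | ∃ a ∈ M.sol φ, ∃ b ∈ M.sol ψ, c = M.fuse a b}

/-- Classical satisfaction of `L_CPL` formulas at a world. -/
def PreModel.satCPL (M : PreModel) : M.W → CPL → Prop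
  | _, .top => True
  | w, .atom p => w ∈ M.V p
  | w, .neg φ => ¬ M.satCPL w φ
  | w, .or φ ψ => M.satCPL w φ ∨ M.satCPL w ψ
  | w, .and φ ψ => M.satCPL w φ ∧ M.satCPL w ψ

/-- Satisfaction of `L_Int` formulas: Boolean clauses are classical,
`M,w ⊨ ⊞φ` iff `φ` holds at every world, and `M,w ⊨ Iα` iff `α` holds at
every conative alternative of `w` and `f(w) ∈ s(α)`. -/
def PreModel.sat (M : PreModel) : M.W → Form → Prop
  | w, .of α => M.satCPL w α
  | w, .neg φ => ¬ M.sat w φ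
  | w, .or φ ψ => M.sat w φ ∨ M.sat w ψ
  | w, .and φ ψ => M.sat w φ ∧ M.sat w ψ
  | _, .box φ => ∀ v, M.sat v φ
  | w, .int α => (∀ v, M.R w v → M.satCPL v α) ∧ M.f w ∈ M.sol α

/-- A problem-sensitive model: a nonempty set of worlds, a serial conative
relation, a problems model (nonempty carrier; idempotent, commutative,
associative fusion with unrestricted fusion; upward-closed solution
assignment), a problem assignment, and a valuation. -/
structure PSModel extends PreModel where
  Wnonempty : Nonempty W
  serial : ∀ w, ∃ v, R w v
  Pnonempty : Nonempty P
  idem : ∀ a, fuse a a = a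
  comm : ∀ a b, fuse a b = fuse b a
  assoc : ∀ a b c, fuse (fuse a b) c = fuse a (fuse b c)
  fusion : ∀ A : Set P, ∃ a, (∀ x ∈ A, fuse x a = a) ∧
    ∀ b, (∀ x ∈ A, fuse x b = b) → fuse a b = b
  upward : ∀ (p : ℕ) (a b : P), fuse a b = b → a ∈ satom p → b ∈ satom p
/-- The data of the canonical model for `Γ₀`: worlds are the members of
`[Γ₀]_⊞`; `Δ R^c Γ` iff `Δ[I] ⊆ Γ`; `P^c = 𝒫(Prop)` with fusion `∪` and
`s^c(p) = {A : p ∈ A}`; `f^c(Δ) = {p : Ip̄ ∈ Δ}`; `V^c(p) = {Δ : p ∈ Δ}`. -/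
def canonPre (Γ₀ : Set Form) : PreModel where
  W := {Δ : Set Form // Δ ∈ canonDomain Γ₀}
  R := fun Δ Γ => intSet Δ.1 ⊆ Γ.1
  P := Set ℕ
  fuse := fun A B => A ∪ B
  satom := fun p => {A | p ∈ A}
  f := fun Δ => {p | Form.int (pbar p) ∈ Δ.1}
  V := fun p => {Δ | Form.of (.atom p) ∈ Δ.1}

/-! ### Auxiliary machinery -/

theorem deriv_mono {Γ : Set Form} {φ : Form} (h : Deriv Γ φ) :
    ∀ {Γ' : Set Form}, Γ ⊆ Γ' → Deriv Γ' φ := by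
  induction h with
  | prem h => exact fun hs => .prem (hs h)
  | taut h => exact fun _ => .taut h
  | mp _ _ ih1 ih2 => exact fun hs => .mp (ih1 hs) (ih2 hs)
  | boxK φ ψ => exact fun _ => .boxK φ ψ
  | boxT φ => exact fun _ => .boxT φ
  | box5 φ => exact fun _ => .box5 φ
  | nec h _ => exact fun _ => .nec h
  | ax1 => exact fun _ => .ax1
  | ax2 α => exact fun _ => .ax2 α
  | ax3 α => exact fun _ => .ax3 α
  | ax4 α β => exact fun _ => .ax4 α β
  | ax5 α β => exact fun _ => .ax5 α β

theorem tautI (φ : Form) : Taut (φ.imp φ) := by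
  intro v u; simp only [Form.imp, Form.eval]
  cases φ.eval v u <;> rfl

theorem tautK' (φ ψ : Form) : Taut (φ.imp (ψ.imp φ)) := by
  intro v u; simp only [Form.imp, Form.eval]
  cases φ.eval v u <;> cases ψ.eval v u <;> rfl

theorem tautS' (φ ψ χ : Form) :
    Taut ((φ.imp (ψ.imp χ)).imp ((φ.imp ψ).imp (φ.imp χ))) := by
  intro v u; simp only [Form.imp, Form.eval]
  cases φ.eval v u <;> cases ψ.eval v u <;> cases χ.eval v u <;> rfl

theorem tautTrans (φ ψ χ : Form) :
    Taut ((φ.imp ψ).imp ((ψ.imp χ).imp (φ.imp χ))) := by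
  intro v u; simp only [Form.imp, Form.eval]
  cases φ.eval v u <;> cases ψ.eval v u <;> cases χ.eval v u <;> rfl

theorem tautAndE1 (φ ψ : Form) : Taut ((φ.and ψ).imp φ) := by
  intro v u; simp only [Form.imp, Form.eval]
  cases φ.eval v u <;> cases ψ.eval v u <;> rfl

theorem tautAndE2 (φ ψ : Form) : Taut ((φ.and ψ).imp ψ) := by
  intro v u; simp only [Form.imp, Form.eval]
  cases φ.eval v u <;> cases ψ.eval v u <;> rfl

theorem tautAndI (φ ψ : Form) : Taut (φ.imp (ψ.imp (φ.and ψ))) := by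
  intro v u; simp only [Form.imp, Form.eval]
  cases φ.eval v u <;> cases ψ.eval v u <;> rfl

theorem tautContr (φ : Form) : Taut (φ.imp ((φ.neg).imp Form.bot)) := by
  intro v u; simp only [Form.imp, Form.bot, Form.eval, CPL.eval]
  cases φ.eval v u <;> rfl

theorem tautNotI (φ : Form) : Taut ((φ.imp Form.bot).imp φ.neg) := by
  intro v u; simp only [Form.imp, Form.bot, Form.eval, CPL.eval]
  cases φ.eval v u <;> rfl

theorem taut9 (φ ψ : Form) : Taut (((φ.neg).imp ψ).imp ((ψ.neg).imp φ)) := by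
  intro v u; simp only [Form.imp, Form.eval]
  cases φ.eval v u <;> cases ψ.eval v u <;> rfl

theorem taut10 (φ ψ : Form) : Taut ((φ.imp ψ.neg).imp (ψ.imp φ.neg)) := by
  intro v u; simp only [Form.imp, Form.eval]
  cases φ.eval v u <;> cases ψ.eval v u <;> rfl

theorem tautNegCPL (α : CPL) :
    Taut (((Form.of α).imp Form.bot).imp ((Form.of α).imp (Form.of (.neg α)))) := by
  intro v u; simp only [Form.imp, Form.bot, Form.eval, CPL.eval]
  cases α.eval v <;> rfl

theorem derivWeaken {Γ : Set Form} {φ ψ : Form} (h : Deriv Γ ψ) :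
    Deriv Γ (φ.imp ψ) := .mp (.taut (tautK' ψ φ)) h

theorem derivImpTrans {Γ : Set Form} {φ ψ χ : Form} (h1 : Deriv Γ (φ.imp ψ))
    (h2 : Deriv Γ (ψ.imp χ)) : Deriv Γ (φ.imp χ) :=
  .mp (.mp (.taut (tautTrans φ ψ χ)) h1) h2

theorem derivAndI {Γ : Set Form} {φ ψ : Form} (h1 : Deriv Γ φ) (h2 : Deriv Γ ψ) :
    Deriv Γ (φ.and ψ) := .mp (.mp (.taut (tautAndI φ ψ)) h1) h2

theorem derivBot {Γ : Set Form} {φ : Form} (h1 : Deriv Γ φ) (h2 : Deriv Γ φ.neg) :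
    Deriv Γ Form.bot := .mp (.mp (.taut (tautContr φ)) h1) h2

theorem derivBoxMP {Γ : Set Form} {φ ψ : Form} (h1 : Deriv Γ (Form.box (φ.imp ψ)))
    (h2 : Deriv Γ (Form.box φ)) : Deriv Γ (Form.box ψ) := .mp (.mp (.boxK φ ψ) h1) h2

theorem derivBoxMono {Γ : Set Form} {φ ψ : Form} (h : Deriv ∅ (φ.imp ψ))
    (h2 : Deriv Γ (Form.box φ)) : Deriv Γ (Form.box ψ) := derivBoxMP (.nec h) h2

theorem deduction_aux {S : Set Form} {ψ : Form} (h : Deriv S ψ) :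
    ∀ (Γ : Set Form) (φ : Form), S = insert φ Γ → Deriv Γ (φ.imp ψ) := by
  induction h with
  | prem h =>
    intro Γ φ hS; subst hS
    rcases Set.mem_insert_iff.mp h with rfl | h
    · exact .taut (tautI _)
    · exact derivWeaken (.prem h)
  | taut h => intro Γ φ _; exact derivWeaken (.taut h)
  | mp _ _ ih1 ih2 =>
    intro Γ φ hS
    exact .mp (.mp (.taut (tautS' _ _ _)) (ih1 Γ φ hS)) (ih2 Γ φ hS)
  | boxK a b => intro Γ φ _; exact derivWeaken (.boxK a b)
  | boxT a => intro Γ φ _; exact derivWeaken (.boxT a)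
  | box5 a => intro Γ φ _; exact derivWeaken (.box5 a)
  | nec h _ => intro Γ φ _; exact derivWeaken (.nec h)
  | ax1 => intro Γ φ _; exact derivWeaken .ax1
  | ax2 α => intro Γ φ _; exact derivWeaken (.ax2 α)
  | ax3 α => intro Γ φ _; exact derivWeaken (.ax3 α)
  | ax4 α β => intro Γ φ _; exact derivWeaken (.ax4 α β)
  | ax5 α β => intro Γ φ _; exact derivWeaken (.ax5 α β)

theorem deduction {Γ : Set Form} {φ ψ : Form} (h : Deriv (insert φ Γ) ψ) :
    Deriv Γ (φ.imp ψ) := deduction_aux h Γ φ rfl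

theorem deriv_list {Γ : Set Form} {φ : Form} (h : Deriv Γ φ) :
    ∃ L : List Form, (∀ x ∈ L, x ∈ Γ) ∧ Deriv {x | x ∈ L} φ := by
  induction h with
  | @prem _ χ h => exact ⟨[χ], by simpa using h, .prem (by simp)⟩
  | taut h => exact ⟨[], by simp, .taut h⟩
  | mp _ _ ih1 ih2 =>
    obtain ⟨L1, hL1, hd1⟩ := ih1
    obtain ⟨L2, hL2, hd2⟩ := ih2
    refine ⟨L1 ++ L2, ?_, .mp (deriv_mono hd1 ?_) (deriv_mono hd2 ?_)⟩
    · intro x hx; rcases List.mem_append.mp hx with h | h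
      exacts [hL1 x h, hL2 x h]
    · intro x hx; exact List.mem_append.mpr (Or.inl hx)
    · intro x hx; exact List.mem_append.mpr (Or.inr hx)
  | boxK a b => exact ⟨[], by simp, .boxK a b⟩
  | boxT a => exact ⟨[], by simp, .boxT a⟩
  | box5 a => exact ⟨[], by simp, .box5 a⟩
  | nec h _ => exact ⟨[], by simp, .nec h⟩
  | ax1 => exact ⟨[], by simp, .ax1⟩
  | ax2 α => exact ⟨[], by simp, .ax2 α⟩
  | ax3 α => exact ⟨[], by simp, .ax3 α⟩
  | ax4 α β => exact ⟨[], by simp, .ax4 α β⟩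
  | ax5 α β => exact ⟨[], by simp, .ax5 α β⟩

theorem MCS.closed {Γ : Set Form} (h : MCS Γ) {φ : Form} (hd : Deriv Γ φ) : φ ∈ Γ := by
  by_contra hφ
  have hcons : LogConsistent (insert φ Γ) := fun hbot => h.1 (.mp (deduction hbot) hd)
  have heq := h.2 _ hcons (Set.subset_insert _ _)
  exact hφ (heq ▸ Set.mem_insert φ Γ)

theorem lindenbaum {S : Set Form} (h : LogConsistent S) :
    ∃ Γ, MCS Γ ∧ S ⊆ Γ := by
  have hzorn : ∀ c ⊆ {T : Set Form | LogConsistent T}, IsChain (· ⊆ ·) c →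
      c.Nonempty → ∃ ub ∈ {T : Set Form | LogConsistent T}, ∀ s ∈ c, s ⊆ ub := by
    intro c hc hchain hne
    refine ⟨⋃₀ c, ?_, fun s hs => Set.subset_sUnion_of_mem hs⟩
    intro hbot
    obtain ⟨L, hLmem, hLd⟩ := deriv_list hbot
    have : ∃ T ∈ c, ∀ x ∈ L, x ∈ T := by
      clear hLd
      induction L with
      | nil => exact ⟨hne.choose, hne.choose_spec, by simp⟩
      | cons a L ih =>
        obtain ⟨T, hT, hTL⟩ := ih (fun x hx => hLmem x (List.mem_cons_of_mem _ hx))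
        obtain ⟨T', hT', haT'⟩ := hLmem a (List.mem_cons_self)
        rcases hchain.total hT hT' with hsub | hsub
        · refine ⟨T', hT', fun x hx => ?_⟩
          rcases List.mem_cons.mp hx with rfl | hx
          exacts [haT', hsub (hTL x hx)]
        · refine ⟨T, hT, fun x hx => ?_⟩
          rcases List.mem_cons.mp hx with rfl | hx
          exacts [hsub haT', hTL x hx]
    obtain ⟨T, hTc, hTL⟩ := this
    exact hc hTc (deriv_mono hLd (fun x hx => hTL x hx))
  obtain ⟨m, hsm, hm⟩ := zorn_subset_nonempty {T : Set Form | LogConsistent T} hzorn S h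
  refine ⟨m, ⟨hm.prop, fun Δ hΔ hsub => ?_⟩, hsm⟩
  exact Set.Subset.antisymm (hm.le_of_ge hΔ hsub) hsub

/-- The `4`-axiom is derivable in `S5`. -/
theorem deriv4 {Γ : Set Form} (φ : Form) :
    Deriv Γ ((Form.box φ).imp (Form.box (Form.box φ))) := by
  have h1 : Deriv Γ ((Form.box φ).imp
      (Form.neg (Form.box (Form.neg (Form.box φ))))) :=
    .mp (.taut (taut10 (Form.box (Form.neg (Form.box φ))) (Form.box φ)))
      (.boxT (Form.neg (Form.box φ)))
  have h2 : Deriv Γ ((Form.neg (Form.box (Form.neg (Form.box φ)))).imp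
      (Form.box (Form.neg (Form.box (Form.neg (Form.box φ)))))) :=
    .box5 (Form.neg (Form.box φ))
  have h3 : Deriv (∅ : Set Form)
      ((Form.neg (Form.box (Form.neg (Form.box φ)))).imp (Form.box φ)) :=
    .mp (.taut (taut9 (Form.box φ) (Form.box (Form.neg (Form.box φ))))) (.box5 φ)
  have h4 : Deriv Γ ((Form.box (Form.neg (Form.box (Form.neg (Form.box φ))))).imp
      (Form.box (Form.box φ))) := .mp (.boxK _ _) (.nec h3)
  exact derivImpTrans h1 (derivImpTrans h2 h4)

theorem derivAx4fwd {Γ : Set Form} (α β : CPL) :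
    Deriv Γ (((Form.int α).and (Form.int β)).imp (Form.int (.and α β))) :=
  .mp (.taut (tautAndE1 _ _)) (.ax4 α β)

def bigAnd : List CPL → CPL
  | [] => .top
  | a :: l => .and a (bigAnd l)

theorem evalBigAnd {v : ℕ → Bool} {l : List CPL} (h : CPL.eval v (bigAnd l) = true) :
    ∀ a ∈ l, CPL.eval v a = true := by
  induction l with
  | nil => simp
  | cons b l ih =>
    simp only [bigAnd, CPL.eval, Bool.and_eq_true] at h
    intro a ha
    rcases List.mem_cons.mp ha with rfl | ha
    exacts [h.1, ih h.2 a ha]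

theorem tautBigAndImp {l : List CPL} {a : CPL} (ha : a ∈ l) :
    Taut ((Form.of (bigAnd l)).imp (Form.of a)) := by
  intro v u
  simp only [Form.imp, Form.eval]
  cases h : CPL.eval v (bigAnd l)
  · rfl
  · simp [evalBigAnd h a ha]

def impList : List Form → Form → Form
  | [], ψ => ψ
  | a :: L, ψ => impList L (a.imp ψ)

theorem deriv_impList : ∀ (L : List Form) (ψ : Form),
    Deriv {x | x ∈ L} ψ → Deriv ∅ (impList L ψ) := by
  intro L
  induction L with
  | nil => exact fun ψ h => deriv_mono h (by intro x hx; simp at hx)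
  | cons a L ih =>
    intro ψ h
    have hset : {x : Form | x ∈ a :: L} = insert a {x | x ∈ L} := by
      ext x; simp [List.mem_cons, Set.mem_insert_iff]
    exact ih _ (deduction (hset ▸ h))

theorem boxImpChain {Γ : Set Form} {β : CPL} :
    ∀ L : List Form, (∀ φ ∈ L, Deriv Γ (Form.box ((Form.of β).imp φ))) →
      ∀ χ, Deriv Γ (Form.box (impList L χ)) →
        Deriv Γ (Form.box ((Form.of β).imp χ)) := by
  intro L
  induction L with
  | nil => exact fun _ χ h => derivBoxMono (.taut (tautK' χ (Form.of β))) h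
  | cons a L ih =>
    intro hall χ h
    have h1 := ih (fun φ hφ => hall φ (List.mem_cons_of_mem _ hφ)) (a.imp χ) h
    have hk : Deriv Γ (Form.box ((((Form.of β).imp (a.imp χ))).imp
        (((Form.of β).imp a).imp ((Form.of β).imp χ)))) :=
      .nec (.taut (tautS' _ _ _))
    exact derivBoxMP (derivBoxMP hk h1) (hall a (List.mem_cons_self))

theorem witness_list {Δ : Set Form} : ∀ L : List Form, (∀ x ∈ L, x ∈ intSet Δ) →
    ∃ P : List (Form × CPL), P.map Prod.fst = L ∧
      ∀ p ∈ P, Form.and (Form.int p.2) (Form.box ((Form.of p.2).imp p.1)) ∈ Δ := by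
  intro L
  induction L with
  | nil => exact fun _ => ⟨[], rfl, by simp⟩
  | cons a L ih =>
    intro h
    obtain ⟨P, hP1, hP2⟩ := ih (fun x hx => h x (List.mem_cons_of_mem _ hx))
    obtain ⟨ψ, hψ⟩ := h a (List.mem_cons_self)
    refine ⟨(a, ψ) :: P, by simp [hP1], ?_⟩
    intro p hp
    rcases List.mem_cons.mp hp with rfl | hp
    exacts [hψ, hP2 p hp]

theorem int_bigAnd {Δ : Set Form} : ∀ P : List (Form × CPL),
    (∀ p ∈ P, Form.and (Form.int p.2) (Form.box ((Form.of p.2).imp p.1)) ∈ Δ) →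
    Deriv Δ (Form.int (bigAnd (P.map Prod.snd))) := by
  intro P
  induction P with
  | nil => exact fun _ => .ax1
  | cons p P ih =>
    intro h
    have h1 : Deriv Δ (Form.int p.2) :=
      .mp (.taut (tautAndE1 _ _)) (.prem (h p (List.mem_cons_self)))
    have h2 := ih (fun q hq => h q (List.mem_cons_of_mem _ hq))
    exact .mp (derivAx4fwd _ _) (derivAndI h1 h2)

theorem intSet_consistent {Δ : Set Form} (hΔ : MCS Δ) : LogConsistent (intSet Δ) := by
  intro hbot
  obtain ⟨L, hLmem, hLd⟩ := deriv_list hbot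
  obtain ⟨P, hPfst, hPmem⟩ := witness_list L hLmem
  set β := bigAnd (P.map Prod.snd) with hβ
  have hIβ : Deriv Δ (Form.int β) := int_bigAnd P hPmem
  have hB : ∀ φ ∈ L, Deriv Δ (Form.box ((Form.of β).imp φ)) := by
    intro φ hφ
    rw [← hPfst] at hφ
    obtain ⟨p, hp, rfl⟩ := List.mem_map.mp hφ
    have h1 : Deriv Δ (Form.box ((Form.of p.2).imp p.1)) :=
      .mp (.taut (tautAndE2 _ _)) (.prem (hPmem p hp))
    have h2 : Deriv Δ (Form.box ((Form.of β).imp (Form.of p.2))) :=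
      .nec (.taut (tautBigAndImp (List.mem_map_of_mem hp)))
    have hk : Deriv Δ (Form.box ((((Form.of β).imp (Form.of p.2))).imp
        (((Form.of p.2).imp p.1).imp ((Form.of β).imp p.1)))) :=
      .nec (.taut (tautTrans _ _ _))
    exact derivBoxMP (derivBoxMP hk h2) h1
  have h0 : Deriv Δ (Form.box (impList L Form.bot)) := .nec (deriv_impList L _ hLd)
  have hβbot : Deriv Δ (Form.box ((Form.of β).imp Form.bot)) :=
    boxImpChain L hB Form.bot h0
  have hβneg : Deriv Δ (Form.box ((Form.of β).imp (Form.of (.neg β)))) :=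
    derivBoxMP (.nec (.taut (tautNegCPL β))) hβbot
  have hbar : (CPL.neg β).bar = β.bar := by simp [CPL.bar, CPL.var]
  have hIbar : Deriv Δ (Form.int (CPL.neg β).bar) := by
    rw [hbar]; exact .mp (.ax2 β) hIβ
  have hInegβ : Deriv Δ (Form.int (.neg β)) :=
    .mp (.mp (.ax5 (.neg β) β) hβneg) (derivAndI hIβ hIbar)
  have hnI : Deriv Δ ((Form.int (.neg β)).neg) := .mp (.ax3 β) hIβ
  exact hΔ.1 (derivBot hInegβ hnI)

theorem upward_aux (p : ℕ) (a b : Set ℕ) (hab : a ∪ b = b)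
    (ha : a ∈ {A : Set ℕ | p ∈ A}) : b ∈ {A : Set ℕ | p ∈ A} := by
  have : p ∈ a ∪ b := Or.inl ha
  rwa [hab] at this

theorem boxSet_subset_intSet {Δ : Set Form} (hΔ : MCS Δ) {φ : Form}
    (h : Form.box φ ∈ Δ) : φ ∈ intSet Δ := by
  refine ⟨.top, hΔ.closed (derivAndI .ax1 ?_)⟩
  exact derivBoxMono (.taut (tautK' φ (Form.of .top))) (.prem h)

/-- For any maximally `Log`-consistent `Γ₀`, the canonical model
for `Γ₀` is a problem-sensitive model: its domain `[Γ₀]_⊞` is nonempty,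
`⊕^c = ∪` is idempotent, commutative, associative with unrestricted fusion,
`s^c` is upward closed, and `R^c` is serial on `[Γ₀]_⊞`. -/
theorem canonical_model_is_PSModel (Γ₀ : Set Form) (hΓ₀ : MCS Γ₀) :
    ∃ M : PSModel, M.toPreModel = canonPre Γ₀ := by
  refine ⟨{ toPreModel := canonPre Γ₀
            Wnonempty := ?_
            serial := ?_
            Pnonempty := ⟨(∅ : Set ℕ)⟩
            idem := fun a => Set.union_self a
            comm := fun a b => Set.union_comm a b
            assoc := fun a b c => Set.union_assoc a b c
            fusion := ?_
            upward := ?_ }, rfl⟩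
  · -- nonempty: Γ₀ itself belongs to its own class
    exact ⟨⟨Γ₀, hΓ₀, fun φ hφ => hΓ₀.closed (.mp (.boxT φ) (.prem hφ))⟩⟩
  · -- seriality
    rintro ⟨Δ, hΔmcs, hΔbox⟩
    obtain ⟨Γ, hΓmcs, hsub⟩ := lindenbaum (intSet_consistent hΔmcs)
    have hΓbox : boxSet Γ₀ ⊆ Γ := by
      intro φ hφ
      have hbb : Form.box (Form.box φ) ∈ Γ₀ := hΓ₀.closed (.mp (deriv4 φ) (.prem hφ))
      have hbΔ : Form.box φ ∈ Δ := hΔbox hbb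
      exact hsub (boxSet_subset_intSet hΔmcs hbΔ)
    exact ⟨⟨Γ, hΓmcs, hΓbox⟩, hsub⟩
  · -- unrestricted fusion
    intro A
    refine ⟨⋃₀ A, fun x hx => ?_, fun b hb => ?_⟩
    · exact Set.union_eq_self_of_subset_left (Set.subset_sUnion_of_mem hx)
    · refine Set.union_eq_self_of_subset_left (Set.sUnion_subset fun x hx => ?_)
      intro p hp
      have := hb x hx
      rw [← this]
      exact Or.inl hp
  · -- upward closure
    exact upward_aux
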